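/- The function B(u,v) = (uv)^{1/4} satisfies, on the domain D₀ = {(u,v) ∈ ℝ₊² : uv ≥ 1/2}, the differential inequality −(du,dv) d²B(u,v) (du,dv)ᵗ ≥ (1/8) (v^{1/4}/u^{7/4}) |du|² for all directions (du,dv), where d²B is the Hessian of B. -/

import Mathlib

lemma hdMulR (v p x : ℝ) (hx : x * v ≠ 0) :
    HasDerivAt (fun t : ℝ => (t * v) ^ p) (p * (x * v) ^ (p - 1) * v) x := by
  have h := (Real.hasDerivAt_rpow_const (x := x * v) (p := p) (Or.inl hx)).comp x
    ((hasDerivAt_id x).mul_const v)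
  simpa [Function.comp_def] using h

lemma hdMulL (u p x : ℝ) (hx : u * x ≠ 0) :
    HasDerivAt (fun t : ℝ => (u * t) ^ p) (p * (u * x) ^ (p - 1) * u) x := by
  have h := (Real.hasDerivAt_rpow_const (x := u * x) (p := p) (Or.inl hx)).comp x
    ((hasDerivAt_id x).const_mul u)
  simpa [mul_comm, Function.comp_def] using h

/-- the Bellman function `B(u,v) = (uv)^{1/4}` satisfies, on
`{uv ≥ 1/2, u,v > 0}`, the Hessian inequality
`−(a,b)·d²B(u,v)·(a,b)ᵗ ≥ (1/8)(v^{1/4}/u^{7/4}) a²`. -/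
theorem stmt9 (u v a b : ℝ) (hu : 0 < u) (hv : 0 < v) (huv : 1/2 ≤ u * v) :
    (1/8) * (v ^ ((1:ℝ)/4) / u ^ ((7:ℝ)/4)) * a ^ 2 ≤
      -(a ^ 2 * deriv (fun u' => deriv (fun u'' => (u'' * v) ^ ((1:ℝ)/4)) u') u
        + 2 * a * b * deriv (fun v' => deriv (fun u' => (u' * v') ^ ((1:ℝ)/4)) u) v
        + b ^ 2 * deriv (fun v' => deriv (fun v'' => (u * v'') ^ ((1:ℝ)/4)) v') v) := by
  have h0 : (0:ℝ) < u * v := mul_pos hu hv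
  -- second derivative in u
  have e1 : deriv (fun u' => deriv (fun u'' => (u'' * v) ^ ((1:ℝ)/4)) u') u
      = ((1:ℝ)/4 * (((1:ℝ)/4 - 1) * (u * v) ^ ((1:ℝ)/4 - 1 - 1) * v)) * v := by
    have heq : (fun u' => deriv (fun u'' => (u'' * v) ^ ((1:ℝ)/4)) u')
        =ᶠ[nhds u] (fun t => ((1:ℝ)/4 * (t * v) ^ ((1:ℝ)/4 - 1)) * v) := by
      filter_upwards [eventually_gt_nhds hu] with t ht
      exact (hdMulR v ((1:ℝ)/4) t (mul_pos ht hv).ne').deriv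
    rw [heq.deriv_eq]
    have h := ((hdMulR v ((1:ℝ)/4 - 1) u h0.ne').const_mul ((1:ℝ)/4)).mul_const v
    exact h.deriv
  -- mixed derivative
  have e2 : deriv (fun v' => deriv (fun u' => (u' * v') ^ ((1:ℝ)/4)) u) v
      = (1:ℝ)/4 * ((((1:ℝ)/4 - 1) * (u * v) ^ ((1:ℝ)/4 - 1 - 1) * u) * v
          + (u * v) ^ ((1:ℝ)/4 - 1) * 1) := by
    have heq : (fun v' => deriv (fun u' => (u' * v') ^ ((1:ℝ)/4)) u)
        =ᶠ[nhds v] (fun w => (1:ℝ)/4 * ((u * w) ^ ((1:ℝ)/4 - 1) * w)) := by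
      filter_upwards [eventually_gt_nhds hv] with w hw
      have := (hdMulR w ((1:ℝ)/4) u (mul_pos hu hw).ne').deriv
      rw [this]; ring
    rw [heq.deriv_eq]
    have h := ((hdMulL u ((1:ℝ)/4 - 1) v h0.ne').mul (hasDerivAt_id v)).const_mul ((1:ℝ)/4)
    exact h.deriv
  -- second derivative in v
  have e3 : deriv (fun v' => deriv (fun v'' => (u * v'') ^ ((1:ℝ)/4)) v') v
      = ((1:ℝ)/4 * (((1:ℝ)/4 - 1) * (u * v) ^ ((1:ℝ)/4 - 1 - 1) * u)) * u := by
    have heq : (fun v' => deriv (fun v'' => (u * v'') ^ ((1:ℝ)/4)) v')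
        =ᶠ[nhds v] (fun t => ((1:ℝ)/4 * (u * t) ^ ((1:ℝ)/4 - 1)) * u) := by
      filter_upwards [eventually_gt_nhds hv] with t ht
      exact (hdMulL u ((1:ℝ)/4) t (mul_pos hu ht).ne').deriv
    rw [heq.deriv_eq]
    have h := ((hdMulL u ((1:ℝ)/4 - 1) v h0.ne').const_mul ((1:ℝ)/4)).mul_const u
    exact h.deriv
  rw [e1, e2, e3]
  set P : ℝ := (u * v) ^ ((1:ℝ)/4 - 1 - 1) with hPdef
  have hP : 0 < P := Real.rpow_pos_of_pos h0 _
  have fM : (u * v) ^ ((1:ℝ)/4 - 1) = u * v * P := by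
    rw [hPdef, show ((1:ℝ)/4 - 1) = 1 + ((1:ℝ)/4 - 1 - 1) by ring, Real.rpow_add h0,
      Real.rpow_one]
    norm_num
  rw [fM]
  have hL : v ^ ((1:ℝ)/4) / u ^ ((7:ℝ)/4) = v * v * P := by
    have hPsplit : P = u ^ ((1:ℝ)/4 - 1 - 1) * v ^ ((1:ℝ)/4 - 1 - 1) :=
      Real.mul_rpow hu.le hv.le
    have h1 : v ^ ((1:ℝ)/4) = v * v * v ^ ((1:ℝ)/4 - 1 - 1) := by
      rw [show ((1:ℝ)/4) = 1 + 1 + ((1:ℝ)/4 - 1 - 1) by ring, Real.rpow_add hv,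
        Real.rpow_add hv, Real.rpow_one]
      norm_num
    have h2 : u ^ ((7:ℝ)/4) * u ^ ((1:ℝ)/4 - 1 - 1) = 1 := by
      rw [← Real.rpow_add hu]
      norm_num
    rw [div_eq_iff (Real.rpow_pos_of_pos hu ((7:ℝ)/4)).ne', hPsplit]
    linear_combination h1 - (v * v * v ^ ((1:ℝ)/4 - 1 - 1)) * h2
  rw [hL]
  nlinarith [mul_nonneg hP.le (sq_nonneg (v * a - u * b)),
    mul_nonneg hP.le (sq_nonneg (u * b))]
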